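/- arXiv:1909.03932 — 2 statements merged into one kernel-verified Lean document; each statement's English description precedes it below -/
import Mathlib

section
/- Let Ω̂ be a real symmetric positive semidefinite n×n matrix with rank(Ω̂) = r ≥ 1. Then for every real symmetric n×n matrix Λ with zero diagonal, one has −‖Ω̂ + Λ‖_r² + 2⟨Λ, Ω̂⟩ + ‖Ω̂‖_F² ≤ 0, with equality when Λ = 0. Consequently the supremum over Λ ∈ S_0^n of −‖Σ + Λ‖_r² + 2⟨Λ, Σ⟩ + ‖Σ‖_F² with Σ = Ω̂ equals 0 and is attained at Λ = 0. -/
open Matrix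

/-- The `k`-th largest singular value (1-indexed) of a real square matrix,
with junk value `0` when `k` is out of range. -/
noncomputable def sv {n : ℕ} (A : Matrix (Fin n) (Fin n) ℝ) (k : ℕ) : ℝ :=
  if h : k - 1 < n then
    (fun i => Real.sqrt ((Matrix.isHermitian_conjTranspose_mul_self A).eigenvalues i))
      (Tuple.sort (fun i : Fin n =>
        Real.sqrt ((Matrix.isHermitian_conjTranspose_mul_self A).eigenvalues i))
        (Fin.rev ⟨k - 1, h⟩))
  else 0

/-- Operator (spectral) norm: the largest singular value. -/
noncomputable def opNorm {n : ℕ} (A : Matrix (Fin n) (Fin n) ℝ) : ℝ := sv A 1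

/-- Frobenius norm. -/
noncomputable def frobNorm {n : ℕ} (A : Matrix (Fin n) (Fin n) ℝ) : ℝ :=
  Real.sqrt (∑ i, ∑ j, (A i j) ^ 2)

/-- The `r`-norm: square root of the sum of squares of the `r` largest singular values. -/
noncomputable def rNorm {n : ℕ} (A : Matrix (Fin n) (Fin n) ℝ) (r : ℕ) : ℝ :=
  Real.sqrt (∑ k ∈ Finset.range r, (sv A (k + 1)) ^ 2)

/-- Frobenius (trace) inner product of square matrices. -/
noncomputable def minner {n : ℕ} (A B : Matrix (Fin n) (Fin n) ℝ) : ℝ :=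
  (Aᵀ * B).trace

/-- The ranges (column spaces) of `A` and `B` are orthogonal. -/
def rangesOrth {n : ℕ} (A B : Matrix (Fin n) (Fin n) ℝ) : Prop :=
  ∀ x y : Fin n → ℝ, (A.mulVec x) ⬝ᵥ (B.mulVec y) = 0


open Matrix

lemma kyfan_sum {n : ℕ} (μ c : Fin n → ℝ) (T : Finset (Fin n)) (m : ℝ)
    (hc0 : ∀ i, 0 ≤ c i) (hc1 : ∀ i, c i ≤ 1) (hsum : ∑ i, c i = (T.card : ℝ))
    (hT : ∀ i ∈ T, m ≤ μ i) (hTc : ∀ i ∉ T, μ i ≤ m) :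
    ∑ i, μ i * c i ≤ ∑ i ∈ T, μ i := by
  have hsplit := (Finset.sum_add_sum_compl T (fun i => μ i * c i)).symm
  have h1 : ∑ i ∈ T, μ i * c i ≤ ∑ i ∈ T, (μ i + m * (c i - 1)) := by
    refine Finset.sum_le_sum fun i hi => ?_
    nlinarith [hT i hi, hc1 i]
  have h2 : ∑ i ∈ Tᶜ, μ i * c i ≤ ∑ i ∈ Tᶜ, m * c i := by
    refine Finset.sum_le_sum fun i hi => ?_
    have := hTc i (by simpa using hi)
    nlinarith [hc0 i]
  have hcsplit := Finset.sum_add_sum_compl T c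
  rw [hsum] at hcsplit
  have : ∑ i ∈ T, (μ i + m * (c i - 1)) + ∑ i ∈ Tᶜ, m * c i = ∑ i ∈ T, μ i := by
    rw [Finset.sum_add_distrib, ← Finset.mul_sum, ← Finset.mul_sum, Finset.sum_sub_distrib]
    simp only [Finset.sum_const, nsmul_eq_mul, mul_one]
    linear_combination m * hcsplit
  linarith [h1, h2, hsplit ▸ (add_le_add h1 h2)]

lemma trace_diagonal_mul {n : ℕ} (d : Fin n → ℝ) (Q : Matrix (Fin n) (Fin n) ℝ) :
    (Matrix.diagonal d * Q).trace = ∑ i, d i * Q i i := by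
  simp [Matrix.trace, Matrix.mul_apply, Matrix.diagonal, Matrix.diag]

lemma psd_diag_nonneg {n : ℕ} {Q : Matrix (Fin n) (Fin n) ℝ} (hQ : Q.PosSemidef) (i : Fin n) :
    0 ≤ Q i i := by
  exact hQ.diag_nonneg

lemma trace_mul_le_kyfan {n : ℕ} (M P : Matrix (Fin n) (Fin n) ℝ) (hM : M.IsHermitian)
    (hP : P.PosSemidef) (hP1 : (1 - P).PosSemidef) (T : Finset (Fin n)) (m : ℝ)
    (htr : P.trace = (T.card : ℝ))
    (hT : ∀ i ∈ T, m ≤ hM.eigenvalues i) (hTc : ∀ i ∉ T, hM.eigenvalues i ≤ m) :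
    (M * P).trace ≤ ∑ i ∈ T, hM.eigenvalues i := by
  set U : Matrix (Fin n) (Fin n) ℝ := (hM.eigenvectorUnitary : Matrix (Fin n) (Fin n) ℝ) with hU
  have hU1 : star U * U = 1 := Unitary.star_mul_self_of_mem hM.eigenvectorUnitary.2
  have hU2 : U * star U = 1 := Unitary.mul_star_self_of_mem hM.eigenvectorUnitary.2
  set Q : Matrix (Fin n) (Fin n) ℝ := star U * P * U with hQdef
  have hQpsd : Q.PosSemidef := by
    have := hP.conjTranspose_mul_mul_same U
    rwa [← Matrix.star_eq_conjTranspose] at this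
  have hQ1psd : ((1 : Matrix (Fin n) (Fin n) ℝ) - Q).PosSemidef := by
    have := hP1.conjTranspose_mul_mul_same U
    have heq : Uᴴ * (1 - P) * U = 1 - Q := by
      rw [Matrix.mul_sub, Matrix.sub_mul, Matrix.mul_one, ← Matrix.star_eq_conjTranspose, hU1,
        hQdef]
    rwa [heq] at this
  have hc0 : ∀ i, 0 ≤ Q i i := psd_diag_nonneg hQpsd
  have hc1 : ∀ i, Q i i ≤ 1 := by
    intro i
    have := psd_diag_nonneg hQ1psd i
    simpa [Matrix.one_apply] using this
  have hcsum : ∑ i, Q i i = (T.card : ℝ) := by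
    have : ∑ i, Q i i = Q.trace := rfl
    rw [this, hQdef, Matrix.trace_mul_cycle, hU2, Matrix.one_mul, htr]
  have hspec := hM.spectral_theorem
  have htrace : (M * P).trace = ∑ i, hM.eigenvalues i * Q i i := by
    conv_lhs => rw [hspec]
    rw [RCLike.ofReal_real_eq_id, Function.id_comp, Unitary.conjStarAlgAut_apply]
    rw [Matrix.mul_assoc, Matrix.mul_assoc, Matrix.trace_mul_comm, Matrix.mul_assoc,
      ← hQdef, trace_diagonal_mul]
  rw [htrace]
  exact kyfan_sum _ _ T m hc0 hc1 hcsum hT hTc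


open Matrix

section helpers
variable {n : ℕ}

lemma eig_nonneg (A : Matrix (Fin n) (Fin n) ℝ) (i : Fin n) :
    0 ≤ (Matrix.isHermitian_conjTranspose_mul_self A).eigenvalues i := by
  have h : (Aᵀ * A).PosSemidef := by
    have := Matrix.posSemidef_conjTranspose_mul_self A
    rwa [Matrix.conjTranspose_eq_transpose_of_trivial] at this
  exact h.eigenvalues_nonneg i

lemma card_filter_ge {r : ℕ} (hrn : r ≤ n) :
    (Finset.filter (fun k : Fin n => n - r ≤ (k : ℕ)) Finset.univ).card = r := by
  have : (Finset.filter (fun k : Fin n => n - r ≤ (k : ℕ)) Finset.univ)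
      = Finset.map ⟨fun j : Fin r => (⟨n - r + (j : ℕ), by omega⟩ : Fin n),
          fun a b hab => by
            have := congrArg Fin.val hab
            simp only at this
            exact Fin.ext (by omega)⟩ Finset.univ := by
    ext i
    simp only [Finset.mem_filter, Finset.mem_univ, true_and, Finset.mem_map,
      Function.Embedding.coeFn_mk]
    constructor
    · intro hi
      exact ⟨⟨(i : ℕ) - (n - r), by omega⟩, Fin.ext (by show n - r + ((i : ℕ) - (n - r)) = (i : ℕ); omega)⟩
    · rintro ⟨j, rfl⟩
      show n - r ≤ n - r + (j : ℕ); omega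
  rw [this, Finset.card_map, Finset.card_univ, Fintype.card_fin]

lemma rnorm_sq_eq {r : ℕ} (A : Matrix (Fin n) (Fin n) ℝ) (hr : 1 ≤ r) (hrn : r ≤ n) :
    ∃ T : Finset (Fin n), ∃ m : ℝ, T.card = r ∧
      (∀ i ∈ T, m ≤ (Matrix.isHermitian_conjTranspose_mul_self A).eigenvalues i) ∧
      (∀ i ∉ T, (Matrix.isHermitian_conjTranspose_mul_self A).eigenvalues i ≤ m) ∧
      (rNorm A r) ^ 2 = ∑ i ∈ T, (Matrix.isHermitian_conjTranspose_mul_self A).eigenvalues i := by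
  classical
  set μ : Fin n → ℝ := (Matrix.isHermitian_conjTranspose_mul_self A).eigenvalues with hμdef
  set f : Fin n → ℝ := fun i => Real.sqrt (μ i) with hfdef
  set σ : Equiv.Perm (Fin n) := Tuple.sort f with hσdef
  have hμ : ∀ i, 0 ≤ μ i := eig_nonneg A
  have hmono : Monotone (f ∘ σ) := Tuple.monotone_sort f
  have hnr : n - r < n := by omega
  set S : Finset (Fin n) := Finset.filter (fun k : Fin n => n - r ≤ (k : ℕ)) Finset.univ with hSdef
  refine ⟨Finset.image σ S, μ (σ ⟨n - r, hnr⟩), ?_, ?_, ?_, ?_⟩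
  · rw [Finset.card_image_of_injective _ σ.injective, hSdef, card_filter_ge hrn]
  · rintro i hi
    rw [Finset.mem_image] at hi
    obtain ⟨k, hk, rfl⟩ := hi
    rw [hSdef, Finset.mem_filter] at hk
    have hle : (⟨n - r, hnr⟩ : Fin n) ≤ k := hk.2
    have := hmono hle
    have h2 := pow_le_pow_left₀ (Real.sqrt_nonneg _) this 2
    simpa [hfdef, Real.sq_sqrt (hμ _)] using h2
  · rintro i hi
    have hk : ((σ.symm i : Fin n) : ℕ) < n - r := by
      by_contra hc
      push_neg at hc
      exact hi (Finset.mem_image.mpr ⟨σ.symm i,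
        by rw [hSdef, Finset.mem_filter]; exact ⟨Finset.mem_univ _, hc⟩,
        σ.apply_symm_apply i⟩)
    have hle : σ.symm i ≤ (⟨n - r, hnr⟩ : Fin n) := le_of_lt hk
    have := hmono hle
    rw [Function.comp_apply, Function.comp_apply, σ.apply_symm_apply] at this
    have h2 := pow_le_pow_left₀ (Real.sqrt_nonneg _) this 2
    simpa [hfdef, Real.sq_sqrt (hμ _)] using h2
  · have hnn : (0:ℝ) ≤ ∑ k ∈ Finset.range r, (sv A (k + 1)) ^ 2 :=
      Finset.sum_nonneg fun k _ => sq_nonneg _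
    rw [rNorm, Real.sq_sqrt hnn]
    refine Finset.sum_bij' (fun k hk => σ (Fin.rev ⟨k, by
        have := Finset.mem_range.mp hk; omega⟩))
      (fun i _ => n - 1 - ((σ.symm i : Fin n) : ℕ)) ?_ ?_ ?_ ?_ ?_
    · intro k hk
      have hkr := Finset.mem_range.mp hk
      refine Finset.mem_image.mpr ⟨Fin.rev ⟨k, by omega⟩, ?_, rfl⟩
      rw [hSdef, Finset.mem_filter]
      refine ⟨Finset.mem_univ _, ?_⟩
      simp [Fin.rev]
      omega
    · intro i hi
      rw [Finset.mem_image] at hi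
      obtain ⟨k, hk, rfl⟩ := hi
      rw [hSdef, Finset.mem_filter] at hk
      simp only [Equiv.symm_apply_apply, Finset.mem_range]
      have := hk.2
      have hkn := k.isLt
      omega
    · intro k hk
      have hkr := Finset.mem_range.mp hk
      simp only [Equiv.symm_apply_apply]
      simp [Fin.rev]
      omega
    · intro i hi
      rw [Finset.mem_image] at hi
      obtain ⟨k, hk, rfl⟩ := hi
      rw [hSdef, Finset.mem_filter] at hk
      simp only [Equiv.symm_apply_apply]
      have hkn := k.isLt
      have h2 := hk.2
      congr 1
      apply Fin.ext
      simp [Fin.rev]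
      omega
    · intro k hk
      have hkr := Finset.mem_range.mp hk
      have hkn : k + 1 - 1 < n := by omega
      rw [sv, dif_pos hkn]
      exact Real.sq_sqrt (hμ ((Tuple.sort f) (Fin.rev ⟨k + 1 - 1, hkn⟩)))
end helpers

section proj
open Matrix
variable {n : ℕ}

lemma trace_transpose_mul_self_nonneg (X : Matrix (Fin n) (Fin n) ℝ) :
    0 ≤ (Xᵀ * X).trace := by
  simp only [Matrix.trace, Matrix.diag, Matrix.mul_apply, Matrix.transpose_apply]
  exact Finset.sum_nonneg fun i _ => Finset.sum_nonneg fun j _ => mul_self_nonneg _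

lemma trace_transpose_mul_self_eq_frob (X : Matrix (Fin n) (Fin n) ℝ) :
    (Xᵀ * X).trace = frobNorm X ^ 2 := by
  have h : (0:ℝ) ≤ ∑ i, ∑ j, (X i j) ^ 2 := by positivity
  rw [frobNorm, Real.sq_sqrt h]
  simp only [Matrix.trace, Matrix.diag, Matrix.mul_apply, Matrix.transpose_apply]
  rw [Finset.sum_comm]
  congr 1
  ext i
  congr 1
  ext j
  ring

lemma sum_eigs_eq_trace {M : Matrix (Fin n) (Fin n) ℝ} (hM : M.IsHermitian) :
    ∑ i, hM.eigenvalues i = M.trace := by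
  conv_rhs => rw [hM.spectral_theorem]
  rw [RCLike.ofReal_real_eq_id, Function.id_comp, Unitary.conjStarAlgAut_apply,
    Matrix.trace_mul_cycle]
  rw [Unitary.star_mul_self_of_mem hM.eigenvectorUnitary.2, Matrix.one_mul, Matrix.trace_diagonal]

lemma exists_proj {r : ℕ} (Ωh : Matrix (Fin n) (Fin n) ℝ) (hΩ : Ωh.PosSemidef)
    (hrank : Ωh.rank = r) :
    ∃ P : Matrix (Fin n) (Fin n) ℝ, P.PosSemidef ∧ (1 - P).PosSemidef ∧
      P.trace = (r : ℝ) ∧ Ωh * P = Ωh ∧ P * P = P ∧ Pᵀ = P := by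
  classical
  set U : Matrix (Fin n) (Fin n) ℝ := (hΩ.1.eigenvectorUnitary : Matrix (Fin n) (Fin n) ℝ)
    with hU
  have hU1 : star U * U = 1 := Unitary.star_mul_self_of_mem hΩ.1.eigenvectorUnitary.2
  have hU2 : U * star U = 1 := Unitary.mul_star_self_of_mem hΩ.1.eigenvectorUnitary.2
  set lam : Fin n → ℝ := hΩ.1.eigenvalues with hlam
  set χ : Fin n → ℝ := fun i => if lam i = 0 then 0 else 1 with hχ
  have hχ0 : (0 : Fin n → ℝ) ≤ χ := by
    intro i; by_cases h : lam i = 0 <;> simp [hχ, h]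
  have hχ1 : ∀ i, 1 - χ i = if lam i = 0 then 1 else 0 := by
    intro i; by_cases h : lam i = 0 <;> simp [hχ, h]
  set P : Matrix (Fin n) (Fin n) ℝ := U * Matrix.diagonal χ * star U with hP
  have hspec : Ωh = U * Matrix.diagonal lam * star U := by
    conv_lhs => rw [hΩ.1.spectral_theorem]
    rw [RCLike.ofReal_real_eq_id, Function.id_comp, Unitary.conjStarAlgAut_apply]
  refine ⟨P, ?_, ?_, ?_, ?_, ?_, ?_⟩
  · have := (Matrix.PosSemidef.diagonal hχ0).mul_mul_conjTranspose_same U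
    rwa [← Matrix.star_eq_conjTranspose] at this
  · have h1 : (1 : Matrix (Fin n) (Fin n) ℝ) - P
        = U * Matrix.diagonal (fun i => 1 - χ i) * star U := by
      have : Matrix.diagonal (fun i => 1 - χ i)
          = (1 : Matrix (Fin n) (Fin n) ℝ) - Matrix.diagonal χ := by
        rw [← Matrix.diagonal_one, ← Matrix.diagonal_sub]
      rw [this, Matrix.mul_sub, Matrix.sub_mul, Matrix.mul_one, hU2, hP]
    rw [h1]
    have hnn : (0 : Fin n → ℝ) ≤ fun i => 1 - χ i := by
      intro i
      show (0:ℝ) ≤ 1 - χ i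
      rw [hχ1 i]; by_cases h : lam i = 0 <;> simp [h]
    have := (Matrix.PosSemidef.diagonal hnn).mul_mul_conjTranspose_same U
    rwa [← Matrix.star_eq_conjTranspose] at this
  · rw [hP, Matrix.trace_mul_cycle, hU1, Matrix.one_mul, Matrix.trace_diagonal]
    have hcount : Ωh.rank = (Finset.univ.filter fun i => lam i ≠ 0).card := by
      rw [hΩ.1.rank_eq_card_non_zero_eigs, Fintype.card_subtype]
    have : ∑ i, χ i = ((Finset.univ.filter fun i => lam i ≠ 0).card : ℝ) := by
      rw [hχ]
      rw [Finset.sum_ite, Finset.sum_const, Finset.sum_const]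
      simp [Finset.filter_not]
    rw [this, ← hcount, hrank]
  · rw [hspec, hP]
    calc U * Matrix.diagonal lam * star U * (U * Matrix.diagonal χ * star U)
        = U * Matrix.diagonal lam * (star U * U) * Matrix.diagonal χ * star U := by
          simp only [Matrix.mul_assoc]
      _ = U * (Matrix.diagonal lam * Matrix.diagonal χ) * star U := by
          rw [hU1]; simp only [Matrix.mul_assoc, Matrix.one_mul]
      _ = U * Matrix.diagonal lam * star U := by
          rw [Matrix.diagonal_mul_diagonal]
          have hd : (fun i => lam i * χ i) = lam := by
            funext i; by_cases h : lam i = 0 <;> simp [hχ, h]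
          rw [hd]
  · rw [hP]
    calc U * Matrix.diagonal χ * star U * (U * Matrix.diagonal χ * star U)
        = U * Matrix.diagonal χ * (star U * U) * Matrix.diagonal χ * star U := by
          simp only [Matrix.mul_assoc]
      _ = U * (Matrix.diagonal χ * Matrix.diagonal χ) * star U := by
          rw [hU1]; simp only [Matrix.mul_assoc, Matrix.one_mul]
      _ = U * Matrix.diagonal χ * star U := by
          rw [Matrix.diagonal_mul_diagonal]
          have hd : (fun i => χ i * χ i) = χ := by
            funext i; by_cases h : lam i = 0 <;> simp [hχ, h]
          rw [hd]
  · have hHerm : P.IsHermitian := by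
      have := (Matrix.PosSemidef.diagonal hχ0).mul_mul_conjTranspose_same U
      rw [← Matrix.star_eq_conjTranspose] at this
      exact this.1
    rw [← Matrix.conjTranspose_eq_transpose_of_trivial]
    exact hHerm
end proj

section main
open Matrix

lemma key_ineq {n r : ℕ} (Ωh Λ : Matrix (Fin n) (Fin n) ℝ) (hΩ : Ωh.PosSemidef)
    (hrank : Ωh.rank = r) (hr : 1 ≤ r) :
    frobNorm Ωh ^ 2 + 2 * minner Λ Ωh ≤ rNorm (Ωh + Λ) r ^ 2 := by
  have hrn : r ≤ n := hrank ▸ (Ωh.rank_le_card_width.trans (Fintype.card_fin n).le)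
  set A : Matrix (Fin n) (Fin n) ℝ := Ωh + Λ with hA
  obtain ⟨T, m, hTcard, hT, hTc, hrn2⟩ := rnorm_sq_eq A hr hrn
  obtain ⟨P, hPpsd, hP1, hPtr, hΩP, hPP, hPt⟩ := exists_proj Ωh hΩ hrank
  have hkf := trace_mul_le_kyfan (Aᵀ * A) P (Matrix.isHermitian_conjTranspose_mul_self A)
    hPpsd hP1 T m (by rw [hPtr, hTcard]) hT hTc
  replace hkf : (Aᵀ * A * P).trace ≤ rNorm A r ^ 2 := by rw [hrn2]; exact hkf
  set C : Matrix (Fin n) (Fin n) ℝ := Λ * P with hC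
  have hAP : A * P = Ωh + C := by rw [hA, Matrix.add_mul, hΩP, hC]
  have htr1 : ((A * P)ᵀ * (A * P)).trace = (Aᵀ * A * P).trace := by
    rw [Matrix.transpose_mul, hPt,
      show P * Aᵀ * (A * P) = P * (Aᵀ * A * P) by simp only [Matrix.mul_assoc],
      Matrix.trace_mul_comm,
      show Aᵀ * A * P * P = Aᵀ * A * (P * P) by simp only [Matrix.mul_assoc], hPP]
  have hCΩ : (Cᵀ * Ωh).trace = minner Λ Ωh := by
    rw [hC, Matrix.transpose_mul, hPt,
      show P * Λᵀ * Ωh = P * (Λᵀ * Ωh) by simp only [Matrix.mul_assoc],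
      Matrix.trace_mul_comm, Matrix.mul_assoc, hΩP, minner]
  have hΩC : (Ωhᵀ * C).trace = minner Λ Ωh := by
    rw [← Matrix.trace_transpose (Ωhᵀ * C), Matrix.transpose_mul, Matrix.transpose_transpose,
      hCΩ]
  have hexp : ((A * P)ᵀ * (A * P)).trace
      = frobNorm Ωh ^ 2 + 2 * minner Λ Ωh + (Cᵀ * C).trace := by
    rw [hAP, Matrix.transpose_add, Matrix.add_mul, Matrix.mul_add, Matrix.mul_add,
      Matrix.trace_add, Matrix.trace_add, Matrix.trace_add,
      trace_transpose_mul_self_eq_frob, hΩC, hCΩ]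
    ring
  have hCC := trace_transpose_mul_self_nonneg C
  rw [← htr1, hexp] at hkf
  linarith [hkf, hCC]
end main

section final
open Matrix

lemma rnorm_le_frob {n r : ℕ} (A : Matrix (Fin n) (Fin n) ℝ) (hr : 1 ≤ r) (hrn : r ≤ n) :
    rNorm A r ^ 2 ≤ frobNorm A ^ 2 := by
  obtain ⟨T, m, hTcard, hT, hTc, heq⟩ := rnorm_sq_eq A hr hrn
  rw [heq, ← trace_transpose_mul_self_eq_frob]
  have h2 : ∑ i, (Matrix.isHermitian_conjTranspose_mul_self A).eigenvalues i = (Aᵀ * A).trace :=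
    sum_eigs_eq_trace _
  rw [← h2]
  exact Finset.sum_le_sum_of_subset_of_nonneg (T.subset_univ)
    (fun i _ _ => eig_nonneg A i)

end final

/-- For PSD `Ωh` of rank `r ≥ 1`, the dual objective
`-‖Ωh + Λ‖_r² + 2⟨Λ, Ωh⟩ + ‖Ωh‖_F²` is `≤ 0` for every symmetric `Λ` with zero
diagonal, with equality at `Λ = 0`; hence its supremum over `S_0^n` is `0`,
attained at `Λ = 0`. -/
theorem stmt1 {n r : ℕ} (Ωh : Matrix (Fin n) (Fin n) ℝ) (hΩ : Ωh.PosSemidef)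
    (hrank : Ωh.rank = r) (hr : 1 ≤ r) :
    (∀ Λ : Matrix (Fin n) (Fin n) ℝ, Λ.IsSymm → (∀ i, Λ i i = 0) →
      -(rNorm (Ωh + Λ) r) ^ 2 + 2 * minner Λ Ωh + (frobNorm Ωh) ^ 2 ≤ 0) ∧
    (-(rNorm (Ωh + 0) r) ^ 2 + 2 * minner 0 Ωh + (frobNorm Ωh) ^ 2 = 0) ∧
    IsGreatest {v : ℝ | ∃ Λ : Matrix (Fin n) (Fin n) ℝ, Λ.IsSymm ∧ (∀ i, Λ i i = 0) ∧
      v = -(rNorm (Ωh + Λ) r) ^ 2 + 2 * minner Λ Ωh + (frobNorm Ωh) ^ 2} 0 := by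
  have hrn : r ≤ n := hrank ▸ (Ωh.rank_le_card_width.trans (Fintype.card_fin n).le)
  have part1 : ∀ Λ : Matrix (Fin n) (Fin n) ℝ,
      -(rNorm (Ωh + Λ) r) ^ 2 + 2 * minner Λ Ωh + (frobNorm Ωh) ^ 2 ≤ 0 := by
    intro Λ
    have := key_ineq Ωh Λ hΩ hrank hr
    linarith
  have hm0 : minner 0 Ωh = 0 := by simp [minner]
  have part2 : -(rNorm (Ωh + 0) r) ^ 2 + 2 * minner 0 Ωh + (frobNorm Ωh) ^ 2 = 0 := by
    have h1 := key_ineq Ωh 0 hΩ hrank hr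
    have h2 : rNorm (Ωh + 0) r ^ 2 ≤ frobNorm Ωh ^ 2 := by
      rw [add_zero]; exact rnorm_le_frob Ωh hr hrn
    rw [hm0] at *
    linarith
  refine ⟨fun Λ _ _ => part1 Λ, part2, ⟨0, ?_, fun i => rfl, part2.symm⟩, ?_⟩
  · simp [Matrix.IsSymm]
  · rintro v ⟨Λ, _, _, rfl⟩
    exact part1 Λ
end

section
/- Let Σ be a real symmetric positive definite n×n matrix and 1 ≤ r ≤ n. Consider the primal problem P: minimize ‖Σ − Ω‖_F² over real n×n matrices Ω with rank(Ω) ≤ r, Ω positive semidefinite, Σ − Ω positive semidefinite, and Σ − Ω diagonal; and the dual problem D: maximize −‖Σ + Λ‖_r² + 2⟨Λ, Σ⟩ + ‖Σ‖_F² over Λ ∈ S_0^n. Suppose the optimal value of P equals the optimal value of D, that Ω⋆ attains the minimum in P, and that Λ⋆ attains the maximum in D. Then Ω⋆ is a best rank-at-most-r Frobenius approximation of Σ + Λ⋆: for every real n×n matrix B with rank(B) ≤ r, ‖(Σ + Λ⋆) − Ω⋆‖_F ≤ ‖(Σ + Λ⋆) − B‖_F. -/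
open Matrix

namespace EYstmt3

noncomputable def F2 {n : ℕ} (A : Matrix (Fin n) (Fin n) ℝ) : ℝ := ∑ i, ∑ j, (A i j) ^ 2

lemma F2_nonneg {n : ℕ} (A : Matrix (Fin n) (Fin n) ℝ) : 0 ≤ F2 A := by
  apply Finset.sum_nonneg; intro i _; apply Finset.sum_nonneg; intro j _; positivity

lemma diag_tmul {m p : Type*} [Fintype m] (A : Matrix m p ℝ) (j : p) :
    (Aᵀ * A) j j = ∑ i, (A i j) ^ 2 := by
  simp [Matrix.mul_apply, sq]

lemma trace_tmul_nonneg {m p : Type*} [Fintype m] [Fintype p] (A : Matrix m p ℝ) :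
    0 ≤ (Aᵀ * A).trace := by
  rw [Matrix.trace]
  apply Finset.sum_nonneg; intro j _
  rw [Matrix.diag_apply, diag_tmul]
  apply Finset.sum_nonneg; intro i _; positivity

lemma trace_eq_sum_eig {n : ℕ} (A : Matrix (Fin n) (Fin n) ℝ) (hA : A.IsHermitian) :
    A.trace = ∑ i, hA.eigenvalues i := by
  conv_lhs => rw [hA.spectral_theorem]
  rw [Unitary.conjStarAlgAut_apply, Matrix.trace_mul_cycle,
    (Matrix.mem_unitaryGroup_iff'.mp (hA.eigenvectorUnitary).2), Matrix.one_mul,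
    Matrix.trace_diagonal]
  simp

lemma F2_eq_trace {n : ℕ} (A : Matrix (Fin n) (Fin n) ℝ) : F2 A = (Aᵀ * A).trace := by
  rw [F2, Matrix.trace, Finset.sum_comm]
  apply Finset.sum_congr rfl
  intro j _
  rw [Matrix.diag_apply, diag_tmul]

lemma proj_diag_le_one {n : Type*} [Fintype n] [DecidableEq n] (P : Matrix n n ℝ)
    (hsym : Pᵀ = P) (hidem : P * P = P) (i : n) : P i i ≤ 1 := by
  set Q : Matrix n n ℝ := 1 - P with hQ
  have h1 : Q * Q = Q := by
    simp only [hQ, Matrix.sub_mul, Matrix.mul_sub, Matrix.mul_one, Matrix.one_mul, hidem]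
    abel
  have h2 : Qᵀ = Q := by rw [hQ, Matrix.transpose_sub, Matrix.transpose_one, hsym]
  have h3 : 0 ≤ Q i i := by
    have : Q i i = (Qᵀ * Q) i i := by rw [h2, h1]
    rw [this, diag_tmul]
    apply Finset.sum_nonneg; intro k _; positivity
  have h4 : Q i i = 1 - P i i := by simp [hQ, Matrix.sub_apply, Matrix.one_apply]
  linarith

lemma trace_proj_conj {n : Type*} [Fintype n] (A X : Matrix n n ℝ)
    (hXsym : Xᵀ = X) (hXidem : X * X = X) :
    ((A * X)ᵀ * (A * X)).trace = ((Aᵀ * A) * X).trace := by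
  rw [Matrix.transpose_mul, hXsym, Matrix.trace_mul_comm,
    Matrix.mul_assoc, ← Matrix.mul_assoc X X Aᵀ, hXidem,
    Matrix.trace_mul_comm, Matrix.mul_assoc, Matrix.trace_mul_comm]

lemma trace_conj_le {n m : Type*} [Fintype n] [Fintype m] [DecidableEq n] [DecidableEq m]
    (A : Matrix n n ℝ) (V : Matrix n m ℝ) (hV : Vᵀ * V = 1) :
    ((A * V)ᵀ * (A * V)).trace ≤ (Aᵀ * A).trace := by
  set P : Matrix n n ℝ := V * Vᵀ with hP
  have hPidem : P * P = P := by
    rw [hP, Matrix.mul_assoc, ← Matrix.mul_assoc Vᵀ V Vᵀ, hV, Matrix.one_mul]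
  have hPsym : Pᵀ = P := by rw [hP, Matrix.transpose_mul, Matrix.transpose_transpose]
  have key : ((A * V)ᵀ * (A * V)).trace = ((Aᵀ * A) * P).trace := by
    have e1 : ((A * V)ᵀ * (A * V)).trace = (Vᵀ * ((Aᵀ * A) * V)).trace := by
      rw [Matrix.transpose_mul]
      simp only [Matrix.mul_assoc]
    rw [e1, Matrix.trace_mul_comm, hP]
    simp only [Matrix.mul_assoc]
  have hQsym : (1 - P)ᵀ = 1 - P := by rw [Matrix.transpose_sub, Matrix.transpose_one, hPsym]
  have hQidem : (1 - P) * (1 - P) = 1 - P := by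
    simp only [Matrix.sub_mul, Matrix.mul_sub, Matrix.mul_one, Matrix.one_mul, hPidem]
    abel
  have hQ : 0 ≤ ((Aᵀ * A) * (1 - P)).trace := by
    rw [← trace_proj_conj A (1 - P) hQsym hQidem]
    exact trace_tmul_nonneg _
  have hsplit : (Aᵀ * A).trace = ((Aᵀ * A) * P).trace + ((Aᵀ * A) * (1 - P)).trace := by
    rw [← Matrix.trace_add, ← Matrix.mul_add]
    simp
  linarith [key, hQ, hsplit]

lemma sorted_bound {n m : ℕ} (hm : m < n) (ν c : Fin n → ℝ) (hmono : Monotone ν)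
    (hc0 : ∀ i, 0 ≤ c i) (hc1 : ∀ i, c i ≤ 1) (hsum : ∑ i, c i = (m : ℝ)) :
    ∑ i ∈ Finset.univ.filter (fun i : Fin n => (i : ℕ) < m), ν i ≤ ∑ i, ν i * c i := by
  classical
  set t := ν ⟨m, hm⟩ with ht
  set sA := Finset.univ.filter (fun i : Fin n => (i : ℕ) < m) with hsA
  have hcard : sA.card = m := by
    have : sA = Finset.univ.map (Fin.castLEEmb hm.le) := by
      ext i
      simp only [hsA, Finset.mem_filter, Finset.mem_univ, true_and, Finset.mem_map,
        Fin.castLEEmb_apply]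
      constructor
      · intro h; exact ⟨⟨i.val, h⟩, Fin.ext rfl⟩
      · rintro ⟨j, rfl⟩; exact j.2
    rw [this, Finset.card_map, Finset.card_univ, Fintype.card_fin]
  have hsplitc : ∑ i ∈ sA, c i + ∑ i ∈ sAᶜ, c i = (m : ℝ) := by
    rw [Finset.sum_add_sum_compl]; exact hsum
  have hstep1 : ∑ i ∈ sA, ν i ≤ ∑ i ∈ sA, (ν i * c i + t * (1 - c i)) := by
    apply Finset.sum_le_sum
    intro i hi
    have hi' : (i : ℕ) < m := by simpa [hsA] using hi
    have hνt : ν i ≤ t := hmono (by exact Fin.le_def.mpr (le_of_lt hi'))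
    nlinarith [hc0 i, hc1 i]
  have hstep2 : ∑ i ∈ sA, (ν i * c i + t * (1 - c i)) =
      ∑ i ∈ sA, ν i * c i + t * ∑ i ∈ sAᶜ, c i := by
    rw [Finset.sum_add_distrib]
    congr 1
    have : ∑ i ∈ sA, t * (1 - c i) = t * ((sA.card : ℝ) - ∑ i ∈ sA, c i) := by
      simp only [mul_sub, mul_one]
      rw [Finset.sum_sub_distrib, Finset.sum_const, nsmul_eq_mul, Finset.mul_sum]; ring
    rw [this, hcard]
    have : ∑ i ∈ sAᶜ, c i = (m : ℝ) - ∑ i ∈ sA, c i := by linarith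
    rw [this]
  have hstep3 : t * ∑ i ∈ sAᶜ, c i ≤ ∑ i ∈ sAᶜ, ν i * c i := by
    rw [Finset.mul_sum]
    apply Finset.sum_le_sum
    intro i hi
    have hi' : m ≤ (i : ℕ) := by
      simp only [hsA, Finset.mem_compl, Finset.mem_filter, Finset.mem_univ, true_and,
        not_lt] at hi
      exact hi
    have : t ≤ ν i := hmono (Fin.le_def.mpr hi')
    exact mul_le_mul_of_nonneg_right this (hc0 i)
  calc ∑ i ∈ sA, ν i ≤ ∑ i ∈ sA, ν i * c i + t * ∑ i ∈ sAᶜ, c i := by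
        rw [← hstep2]; exact hstep1
    _ ≤ ∑ i ∈ sA, ν i * c i + ∑ i ∈ sAᶜ, ν i * c i := by linarith
    _ = ∑ i, ν i * c i := Finset.sum_add_sum_compl _ _

noncomputable def kerMap {n : ℕ} (B : Matrix (Fin n) (Fin n) ℝ) :
    EuclideanSpace ℝ (Fin n) →ₗ[ℝ] EuclideanSpace ℝ (Fin n) where
  toFun x := WithLp.toLp 2 (B.mulVec x)
  map_add' x y := by simp [Matrix.mulVec_add]
  map_smul' c x := by simp [Matrix.mulVec_smul]

lemma exists_kernel_onb {n : ℕ} (B : Matrix (Fin n) (Fin n) ℝ) (m : ℕ)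
    (hm : m + B.rank ≤ n) :
    ∃ v : Fin m → EuclideanSpace ℝ (Fin n),
      (∀ j, B.mulVec (v j) = 0) ∧
      (∀ j j', ∑ i, v j i * v j' i = if j = j' then 1 else 0) := by
  classical
  set K := LinearMap.ker (kerMap B) with hK
  have hrange : Module.finrank ℝ (LinearMap.range (kerMap B)) = B.rank := by
    have e : kerMap B = (WithLp.linearEquiv 2 ℝ (Fin n → ℝ)).symm.toLinearMap ∘ₗ
        B.mulVecLin ∘ₗ (WithLp.linearEquiv 2 ℝ (Fin n → ℝ)).toLinearMap :=
      LinearMap.ext fun x => rfl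
    rw [Matrix.rank, e, LinearMap.range_comp,
      LinearMap.range_comp_of_range_eq_top _ (LinearEquiv.range _), LinearEquiv.finrank_map_eq]
  have hrn := LinearMap.finrank_range_add_finrank_ker (kerMap B)
  rw [hrange, finrank_euclideanSpace_fin] at hrn
  rw [← hK] at hrn
  have hdim : m ≤ Module.finrank ℝ K := by omega
  let ob := stdOrthonormalBasis ℝ K
  refine ⟨fun j => (ob (Fin.castLE hdim j) : EuclideanSpace ℝ (Fin n)), ?_, ?_⟩
  · intro j
    have h := LinearMap.mem_ker.mp (ob (Fin.castLE hdim j)).2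
    exact congrArg WithLp.ofLp h
  · intro j j'
    have horth := ob.orthonormal
    rw [orthonormal_iff_ite] at horth
    have h := horth (Fin.castLE hdim j) (Fin.castLE hdim j')
    rw [Submodule.coe_inner] at h
    simp only [Fin.castLE_inj] at h
    rw [← h]
    rw [PiLp.inner_apply]
    apply Finset.sum_congr rfl
    intro i _
    rw [RCLike.inner_apply, starRingEnd_apply, star_trivial]
    exact mul_comm _ _

lemma F2_sub_rNorm_le {n r : ℕ} (hr1 : 1 ≤ r) (hrn : r ≤ n)
    (M B : Matrix (Fin n) (Fin n) ℝ) (hB : B.rank ≤ r) :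
    F2 M - (rNorm M r) ^ 2 ≤ F2 (M - B) := by
  classical
  have hH : (Mᵀ * M).IsHermitian := Matrix.isHermitian_conjTranspose_mul_self M
  set μ : Fin n → ℝ := hH.eigenvalues with hμdef
  have hpsd : (Mᵀ * M).PosSemidef := by
    have := Matrix.posSemidef_conjTranspose_mul_self M
    simpa using this
  have hμ0 : ∀ i, 0 ≤ μ i := fun i => hpsd.eigenvalues_nonneg i
  set g : Fin n → ℝ := fun i => Real.sqrt (μ i) with hgdef
  set σp : Equiv.Perm (Fin n) := Tuple.sort g with hσdef
  set ν : Fin n → ℝ := fun i => μ (σp i) with hνdef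
  have hνmono : Monotone ν := by
    intro a b hab
    have hg : g (σp a) ≤ g (σp b) := Tuple.monotone_sort g hab
    show μ (σp a) ≤ μ (σp b)
    nlinarith [Real.sq_sqrt (hμ0 (σp a)), Real.sq_sqrt (hμ0 (σp b)),
      Real.sqrt_nonneg (μ (σp a)), Real.sqrt_nonneg (μ (σp b))]
  have hsv2 : ∀ (k : ℕ) (hk : k < n), (sv M (k + 1)) ^ 2 = ν (Fin.rev ⟨k, hk⟩) := by
    intro k hk
    have h1 : sv M (k + 1) = g (σp (Fin.rev ⟨k, hk⟩)) := by
      rw [sv]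
      simp only [Nat.add_sub_cancel]
      rw [dif_pos hk]
      rfl
    rw [h1, hgdef]
    exact Real.sq_sqrt (hμ0 _)
  have hinj : Function.Injective (fun j : Fin r => Fin.rev (Fin.castLE hrn j)) := by
    intro a b h
    exact Fin.castLE_injective hrn (Fin.rev_injective h)
  set topSet : Finset (Fin n) := Finset.univ.map ⟨_, hinj⟩ with htopdef
  have hmemtop : ∀ i : Fin n, i ∈ topSet ↔ n - r ≤ (i : ℕ) := by
    intro i
    simp only [htopdef, Finset.mem_map, Finset.mem_univ, true_and, Function.Embedding.coeFn_mk]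
    constructor
    · rintro ⟨j, rfl⟩
      have := j.2
      simp only [Fin.val_rev, Fin.coe_castLE]
      omega
    · intro h
      have hi := i.2
      refine ⟨⟨n - 1 - (i : ℕ), by omega⟩, ?_⟩
      apply Fin.ext
      simp only [Fin.val_rev, Fin.coe_castLE]
      omega
  have hrN : (rNorm M r) ^ 2 = ∑ i ∈ topSet, ν i := by
    rw [rNorm, Real.sq_sqrt (by
      apply Finset.sum_nonneg; intro k _; positivity)]
    rw [← Fin.sum_univ_eq_sum_range (fun k => (sv M (k + 1)) ^ 2) r]
    rw [htopdef, Finset.sum_map]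
    apply Finset.sum_congr rfl
    intro j _
    exact hsv2 j.val (lt_of_lt_of_le j.2 hrn)
  have hF2M : F2 M = ∑ i, ν i := by
    rw [F2_eq_trace, trace_eq_sum_eig _ hH, ← Equiv.sum_comp σp μ]
  have hdecomp : F2 M - (rNorm M r) ^ 2 = ∑ i ∈ topSetᶜ, ν i := by
    rw [hF2M, hrN, ← Finset.sum_add_sum_compl topSet ν]
    ring
  have hbot : Finset.univ.filter (fun i : Fin n => (i : ℕ) < n - r) = topSetᶜ := by
    ext i
    simp only [Finset.mem_filter, Finset.mem_univ, true_and, Finset.mem_compl, hmemtop]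
    omega
  set m := n - r with hmdef
  have hmn : m < n := by omega
  have hm' : m + B.rank ≤ n := by omega
  obtain ⟨v, hvker, hvorth⟩ := exists_kernel_onb B m hm'
  set V : Matrix (Fin n) (Fin m) ℝ := Matrix.of (fun i j => v j i) with hVdef
  have hVV : Vᵀ * V = 1 := by
    ext j j'
    rw [Matrix.mul_apply]
    simp only [hVdef, Matrix.transpose_apply, Matrix.of_apply, Matrix.one_apply]
    exact hvorth j j'
  have hBV : B * V = 0 := by
    ext i j
    have := congrFun (hvker j) i
    simpa [Matrix.mul_apply, Matrix.mulVec, dotProduct, hVdef] using this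
  set Us : Matrix (Fin n) (Fin n) ℝ := (hH.eigenvectorUnitary : Matrix (Fin n) (Fin n) ℝ)
    with hUsdef
  have hstar : star Us = Usᵀ := by
    ext i j; simp [Matrix.star_apply]
  have hU2 : Us * Usᵀ = 1 := by
    rw [← hstar]; exact Matrix.mem_unitaryGroup_iff.mp hH.eigenvectorUnitary.2
  have hspec : Mᵀ * M = Us * Matrix.diagonal μ * Usᵀ := by
    have h := hH.spectral_theorem
    have hof : (RCLike.ofReal ∘ μ : Fin n → ℝ) = μ := by ext i; simp
    rw [Unitary.conjStarAlgAut_apply, hof, hstar] at h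
    exact h
  set W : Matrix (Fin n) (Fin m) ℝ := Usᵀ * V with hWdef
  set c : Fin n → ℝ := fun i => ∑ j, (W i j) ^ 2 with hcdef
  have hc0 : ∀ i, 0 ≤ c i := by
    intro i; apply Finset.sum_nonneg; intro j _; positivity
  have hWtW : Wᵀ * W = 1 := by
    rw [hWdef, Matrix.transpose_mul, Matrix.transpose_transpose, Matrix.mul_assoc,
      ← Matrix.mul_assoc Us Usᵀ V, hU2, Matrix.one_mul, hVV]
  have hQsym : (W * Wᵀ)ᵀ = W * Wᵀ := by
    rw [Matrix.transpose_mul, Matrix.transpose_transpose]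
  have hQidem : (W * Wᵀ) * (W * Wᵀ) = W * Wᵀ := by
    rw [Matrix.mul_assoc, ← Matrix.mul_assoc Wᵀ W Wᵀ, hWtW, Matrix.one_mul]
  have hc1 : ∀ i, c i ≤ 1 := by
    intro i
    have hci : c i = (W * Wᵀ) i i := by
      rw [Matrix.mul_apply]
      apply Finset.sum_congr rfl
      intro j _
      simp [Matrix.transpose_apply, sq]
    rw [hci]
    exact proj_diag_le_one _ hQsym hQidem i
  have hcsum : ∑ i, c i = (m : ℝ) := by
    have h1 : ∑ i, c i = (Wᵀ * W).trace := by
      simp only [hcdef, Matrix.trace]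
      rw [Finset.sum_comm]
      apply Finset.sum_congr rfl
      intro j _
      rw [Matrix.diag_apply, diag_tmul]
    rw [h1, hWtW, Matrix.trace_one]
    simp
  have hMVt : (M * V)ᵀ * (M * V) = Wᵀ * (Matrix.diagonal μ * W) := by
    rw [Matrix.transpose_mul, Matrix.mul_assoc, ← Matrix.mul_assoc Mᵀ M V, hspec]
    rw [hWdef, Matrix.transpose_mul, Matrix.transpose_transpose]
    simp only [Matrix.mul_assoc]
  have htr : (Wᵀ * (Matrix.diagonal μ * W)).trace = ∑ i, μ i * c i := by
    have hentry : ∀ j, (Wᵀ * (Matrix.diagonal μ * W)) j j = ∑ i, μ i * (W i j) ^ 2 := by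
      intro j
      rw [Matrix.mul_apply]
      apply Finset.sum_congr rfl
      intro i _
      rw [Matrix.transpose_apply]
      have hd : (Matrix.diagonal μ * W) i j = μ i * W i j := by
        rw [Matrix.mul_apply]
        simp [Matrix.diagonal_apply, ite_mul]
      rw [hd]; ring
    rw [Matrix.trace]
    calc ∑ j, (Wᵀ * (Matrix.diagonal μ * W)).diag j = ∑ j, ∑ i, μ i * (W i j) ^ 2 := by
          apply Finset.sum_congr rfl; intro j _; rw [Matrix.diag_apply, hentry]
      _ = ∑ i, ∑ j, μ i * (W i j) ^ 2 := Finset.sum_comm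
      _ = ∑ i, μ i * c i := by
          apply Finset.sum_congr rfl; intro i _; rw [hcdef, Finset.mul_sum]
  have step1 : ∑ i ∈ topSetᶜ, ν i ≤ ∑ i, μ i * c i := by
    have e1 : ∑ i, μ i * c i = ∑ i, ν i * c (σp i) :=
      (Equiv.sum_comp σp (fun i => μ i * c i)).symm
    have e2 : ∑ i, c (σp i) = (m : ℝ) := by rw [Equiv.sum_comp σp c]; exact hcsum
    rw [e1, ← hbot]
    exact sorted_bound hmn ν (fun i => c (σp i)) hνmono (fun i => hc0 _) (fun i => hc1 _) e2
  have step2 : ∑ i, μ i * c i ≤ F2 (M - B) := by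
    have hsubV : (M - B) * V = M * V := by
      rw [Matrix.sub_mul, hBV, sub_zero]
    have := trace_conj_le (M - B) V hVV
    rw [hsubV, hMVt] at this
    rw [F2_eq_trace]
    linarith [htr ▸ this]
  linarith [hdecomp, step1, step2]

end EYstmt3

open EYstmt3 in
/-- If the primal and dual optimal values coincide, `Ωs` attains the
primal minimum and `Λs` attains the dual maximum, then `Ωs` is a best
rank-at-most-`r` Frobenius approximation of `Sg + Λs`. -/
theorem stmt3 {n r : ℕ} (hr1 : 1 ≤ r) (hrn : r ≤ n)
    (Sg : Matrix (Fin n) (Fin n) ℝ) (hSg : Sg.PosDef)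
    (Ωs Λs : Matrix (Fin n) (Fin n) ℝ)
    -- `Ωs` is primal feasible:
    (hΩr : Ωs.rank ≤ r) (hΩpsd : Ωs.PosSemidef)
    (hSO : (Sg - Ωs).PosSemidef) (hSOd : (Sg - Ωs).IsDiag)
    -- `Λs` is dual feasible:
    (hΛsym : Λs.IsSymm) (hΛ0 : ∀ i, Λs i i = 0)
    -- `Ωs` attains the primal minimum:
    (hΩopt : ∀ Ω : Matrix (Fin n) (Fin n) ℝ, Ω.rank ≤ r → Ω.PosSemidef →
      (Sg - Ω).PosSemidef → (Sg - Ω).IsDiag →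
      (frobNorm (Sg - Ωs)) ^ 2 ≤ (frobNorm (Sg - Ω)) ^ 2)
    -- `Λs` attains the dual maximum:
    (hΛopt : ∀ Λ : Matrix (Fin n) (Fin n) ℝ, Λ.IsSymm → (∀ i, Λ i i = 0) →
      -(rNorm (Sg + Λ) r) ^ 2 + 2 * minner Λ Sg + (frobNorm Sg) ^ 2 ≤
        -(rNorm (Sg + Λs) r) ^ 2 + 2 * minner Λs Sg + (frobNorm Sg) ^ 2)
    -- zero duality gap: the optimal values coincide:
    (hgap : (frobNorm (Sg - Ωs)) ^ 2 =
      -(rNorm (Sg + Λs) r) ^ 2 + 2 * minner Λs Sg + (frobNorm Sg) ^ 2) :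
    ∀ B : Matrix (Fin n) (Fin n) ℝ, B.rank ≤ r →
      frobNorm ((Sg + Λs) - Ωs) ≤ frobNorm ((Sg + Λs) - B) := by
  have frobsq : ∀ X : Matrix (Fin n) (Fin n) ℝ, (frobNorm X) ^ 2 = F2 X := fun X =>
    Real.sq_sqrt (F2_nonneg X)
  have minner_eq : ∀ A C : Matrix (Fin n) (Fin n) ℝ, minner A C = ∑ i, ∑ j, A i j * C i j := by
    intro A C
    rw [minner]
    calc (Aᵀ * C).trace = ∑ x, ∑ i, A i x * C i x := by
          rw [Matrix.trace]
          apply Finset.sum_congr rfl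
          intro x _
          simp [Matrix.mul_apply]
      _ = ∑ i, ∑ x, A i x * C i x := Finset.sum_comm
  have h1 : F2 (Sg + Λs - Ωs) = F2 (Sg - Ωs) + F2 Λs := by
    have e : ∀ i j, ((Sg + Λs - Ωs) i j) ^ 2 = ((Sg - Ωs) i j) ^ 2 + (Λs i j) ^ 2 := by
      intro i j
      have hentry : (Sg + Λs - Ωs) i j = (Sg - Ωs) i j + Λs i j := by
        simp only [Matrix.add_apply, Matrix.sub_apply]; ring
      by_cases hij : i = j
      · subst hij
        rw [hentry, hΛ0 i]; ring
      · rw [hentry, hSOd hij]; ring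
    rw [show F2 (Sg + Λs - Ωs) = ∑ i, ∑ j, ((Sg + Λs - Ωs) i j) ^ 2 from rfl]
    rw [show F2 (Sg - Ωs) + F2 Λs
        = ∑ i, (∑ j, ((Sg - Ωs) i j) ^ 2) + ∑ i, (∑ j, (Λs i j) ^ 2) from rfl]
    rw [← Finset.sum_add_distrib]
    apply Finset.sum_congr rfl
    intro i _
    rw [← Finset.sum_add_distrib]
    apply Finset.sum_congr rfl
    intro j _
    exact e i j
  have h2 : F2 (Sg + Λs) = F2 Sg + 2 * minner Λs Sg + F2 Λs := by
    have e3 : ∑ i, ∑ j, 2 * (Λs i j * Sg i j) = 2 * minner Λs Sg := by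
      rw [minner_eq, Finset.mul_sum]
      apply Finset.sum_congr rfl
      intro i _
      rw [Finset.mul_sum]
    have expand : F2 (Sg + Λs)
        = ∑ i, ∑ j, ((Sg i j) ^ 2 + 2 * (Λs i j * Sg i j) + (Λs i j) ^ 2) := by
      rw [F2]
      apply Finset.sum_congr rfl; intro i _
      apply Finset.sum_congr rfl; intro j _
      rw [Matrix.add_apply]; ring
    rw [expand]
    simp only [Finset.sum_add_distrib]
    rw [e3, F2, F2]
  have h3 := hgap
  rw [frobsq (Sg - Ωs), frobsq Sg] at h3
  intro B hB
  have hlow := F2_sub_rNorm_le hr1 hrn (Sg + Λs) B hB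
  have hkey : F2 (Sg + Λs - Ωs) = F2 (Sg + Λs) - (rNorm (Sg + Λs) r) ^ 2 := by linarith
  have hfin : F2 (Sg + Λs - Ωs) ≤ F2 (Sg + Λs - B) := by linarith
  rw [frobNorm, frobNorm]
  apply Real.sqrt_le_sqrt
  simpa [F2] using hfin
end
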